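/- In the Euclidean plane, a line perpendicular to the bisector of an acute angle at a point strictly inside the angle must meet both arms of the angle. Precisely: let O be a point, let u and v be unit vectors with 0 < ∠(u,v) < π/2, let the two arms be the rays {O + t·u : t ≥ 0} and {O + t·v : t ≥ 0}, let b = (u + v)/‖u + v‖ be the direction of the angle bisector, let P = O + s·b for some s > 0 be a point inside the angle on the bisector, and let m be the line through P perpendicular to b. Then m meets both arms: there exist t₁ ≥ 0 and t₂ ≥ 0 with O + t₁·u ∈ m and O + t₂·v ∈ m. -/

import Mathlib

open InnerProductGeometry in
/-- In the Euclidean plane, a line perpendicular to the bisector of an acute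
angle at a point strictly inside the angle must meet both arms of the angle. -/
theorem perp_to_bisector_meets_both_arms
    {V : Type*} [NormedAddCommGroup V] [InnerProductSpace ℝ V]
    (hdim : Module.finrank ℝ V = 2)
    (O u v : V) (hu : ‖u‖ = 1) (hv : ‖v‖ = 1)
    (hang₀ : 0 < InnerProductGeometry.angle u v)
    (hang₁ : InnerProductGeometry.angle u v < Real.pi / 2)
    (b : V) (hb : b = ‖u + v‖⁻¹ • (u + v))
    (s : ℝ) (hs : 0 < s)
    (P : V) (hP : P = O + s • b)
    (d : V) (hd : d ≠ 0) (hdb : (inner ℝ d b : ℝ) = 0) :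
    (∃ t₁ r₁ : ℝ, 0 ≤ t₁ ∧ O + t₁ • u = P + r₁ • d) ∧
    (∃ t₂ r₂ : ℝ, 0 ≤ t₂ ∧ O + t₂ • v = P + r₂ • d) := by
  haveI : FiniteDimensional ℝ V := Module.finite_of_finrank_eq_succ hdim
  -- inner ℝ u v = cos (angle u v) > 0
  have hcos : (inner ℝ u v : ℝ) = Real.cos (InnerProductGeometry.angle u v) := by
    rw [InnerProductGeometry.cos_angle, hu, hv]; ring
  have hcpos : 0 < (inner ℝ u v : ℝ) := by
    rw [hcos]
    exact Real.cos_pos_of_mem_Ioo ⟨by linarith [Real.pi_pos], hang₁⟩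
  have huu : (inner ℝ u u : ℝ) = 1 := by
    rw [real_inner_self_eq_norm_sq, hu]; norm_num
  have hvv : (inner ℝ v v : ℝ) = 1 := by
    rw [real_inner_self_eq_norm_sq, hv]; norm_num
  have hsymm : (inner ℝ v u : ℝ) = inner ℝ u v := (real_inner_comm u v)
  have huvsq : ‖u + v‖ ^ 2 = 2 + 2 * (inner ℝ u v : ℝ) := by
    rw [← real_inner_self_eq_norm_sq]
    rw [inner_add_add_self, huu, hvv, hsymm]
    ring
  have huvpos : 0 < ‖u + v‖ := by
    by_contra h
    push_neg at h
    have : ‖u + v‖ = 0 := le_antisymm h (norm_nonneg _)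
    rw [this] at huvsq
    nlinarith
  have hbnorm : ‖b‖ = 1 := by
    rw [hb, norm_smul]
    simp [abs_of_pos (inv_pos.mpr huvpos)]
    field_simp
  have hbb : (inner ℝ b b : ℝ) = 1 := by
    rw [real_inner_self_eq_norm_sq, hbnorm]; norm_num
  have hub : (inner ℝ u b : ℝ) = ‖u + v‖⁻¹ * (1 + inner ℝ u v) := by
    rw [hb, real_inner_smul_right, inner_add_right, huu]
  have hvb : (inner ℝ v b : ℝ) = ‖u + v‖⁻¹ * (1 + inner ℝ u v) := by
    rw [hb, real_inner_smul_right, inner_add_right, hvv, hsymm]; ring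
  have hubpos : 0 < (inner ℝ u b : ℝ) := by
    rw [hub]; positivity
  have hvbpos : 0 < (inner ℝ v b : ℝ) := by
    rw [hvb]; positivity
  have hbne : b ≠ 0 := by
    intro h; rw [h, norm_zero] at hbnorm; norm_num at hbnorm
  -- the orthogonal complement of span b is spanned by d
  haveI : Fact (Module.finrank ℝ V = 1 + 1) := ⟨by omega⟩
  have hW : Module.finrank ℝ (ℝ ∙ b)ᗮ = 1 :=
    Submodule.finrank_orthogonal_span_singleton hbne
  have hdW : d ∈ (ℝ ∙ b)ᗮ := by
    rw [Submodule.mem_orthogonal_singleton_iff_inner_left]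
    exact hdb
  have hspan : (ℝ ∙ d) = (ℝ ∙ b)ᗮ := by
    apply Submodule.eq_of_le_of_finrank_eq
    · rw [Submodule.span_singleton_le_iff_mem]; exact hdW
    · rw [hW, finrank_span_singleton hd]
  have key : ∀ w : V, (inner ℝ w b : ℝ) = 0 → ∃ r : ℝ, w = r • d := by
    intro w hw
    have : w ∈ (ℝ ∙ b)ᗮ := by
      rw [Submodule.mem_orthogonal_singleton_iff_inner_left]; exact hw
    rw [← hspan, Submodule.mem_span_singleton] at this
    obtain ⟨r, hr⟩ := this
    exact ⟨r, hr.symm⟩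
  constructor
  · obtain ⟨r, hr⟩ := key ((s / inner ℝ u b) • u - s • b) (by
      rw [inner_sub_left, real_inner_smul_left, real_inner_smul_left, hbb]
      field_simp; ring)
    refine ⟨s / inner ℝ u b, r, le_of_lt (by positivity), ?_⟩
    rw [hP]
    have h2 : O + (s / inner ℝ u b) • u = O + s • b + (((s / inner ℝ u b) • u - s • b)) := by
      abel
    rw [h2, hr]
  · obtain ⟨r, hr⟩ := key ((s / inner ℝ v b) • v - s • b) (by
      rw [inner_sub_left, real_inner_smul_left, real_inner_smul_left, hbb]
      field_simp; ring)
    refine ⟨s / inner ℝ v b, r, le_of_lt (by positivity), ?_⟩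
    rw [hP]
    have h2 : O + (s / inner ℝ v b) • v = O + s • b + (((s / inner ℝ v b) • v - s • b)) := by
      abel
    rw [h2, hr]
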